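/- Let ℚ(h) be the rational function field in one indeterminate h over ℚ, and set z = (h³−3h+1)/(h(h−1)) ∈ ℚ(h). Then the following two identities hold in ℚ(h): (z²−3z+9)(z²−11z+25)³/(z−8) = (h²−h+1)³(h⁶−11h⁵+30h⁴−15h³−10h²+5h+1)³/(h⁷(h−1)⁷(h³−8h²+5h+1)), and (z²−3z+9)(z²+229z+505)³/(z−8)⁷ = (h²−h+1)³(h⁶+229h⁵+270h⁴−1695h³+1430h²−235h+1)³/(h(h−1)(h³−8h²+5h+1)⁷). (Note that z − 8 = (h³−8h²+5h+1)/(h(h−1)) ≠ 0 in ℚ(h), so all quotients are well defined.) -/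

import Mathlib

lemma ratfunc_poly_ne_zero (p : Polynomial ℚ) (hp : p ≠ 0) :
    (algebraMap (Polynomial ℚ) (RatFunc ℚ) p) ≠ 0 := by
  simpa using (RatFunc.algebraMap_ne_zero hp)

lemma frac1 {K : Type*} [Field K] (a b c : K) (hb : b ≠ 0) (hc : c ≠ 0) :
    ((a/b)^2 - 3*(a/b) + 9) * ((a/b)^2 - 11*(a/b) + 25)^3 / (c/b) =
      (a^2 - 3*a*b + 9*b^2) * (a^2 - 11*a*b + 25*b^2)^3 / (b^7 * c) := by
  rw [div_eq_div_iff (div_ne_zero hc hb) (mul_ne_zero (pow_ne_zero 7 hb) hc)]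
  field_simp

lemma frac2 {K : Type*} [Field K] (a b c : K) (hb : b ≠ 0) (hc : c ≠ 0) :
    ((a/b)^2 - 3*(a/b) + 9) * ((a/b)^2 + 229*(a/b) + 505)^3 / (c/b)^7 =
      (a^2 - 3*a*b + 9*b^2) * (a^2 + 229*a*b + 505*b^2)^3 / (b * c^7) := by
  rw [div_eq_div_iff (pow_ne_zero 7 (div_ne_zero hc hb)) (mul_ne_zero hb (pow_ne_zero 7 hc))]
  field_simp

/-- The two identities relating the Hauptmoduls `z` of `Γ₀(7)` and `h` of `Γ₁(7)`:
with `z = (h³-3h+1)/(h(h-1))` in `ℚ(h)`, the rational functions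
`(z²-3z+9)(z²-11z+25)³/(z-8)` and `(z²-3z+9)(z²+229z+505)³/(z-8)⁷` equal
`j₇(h)` and `j₇,₇(h)` respectively. -/
theorem z_identities_in_ratfunc :
    ∀ h : RatFunc ℚ, h = RatFunc.X →
      ∀ z : RatFunc ℚ, z = (h ^ 3 - 3 * h + 1) / (h * (h - 1)) →
        (z ^ 2 - 3 * z + 9) * (z ^ 2 - 11 * z + 25) ^ 3 / (z - 8) =
            (h ^ 2 - h + 1) ^ 3 *
                (h ^ 6 - 11 * h ^ 5 + 30 * h ^ 4 - 15 * h ^ 3 - 10 * h ^ 2 + 5 * h + 1) ^ 3 /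
              (h ^ 7 * (h - 1) ^ 7 * (h ^ 3 - 8 * h ^ 2 + 5 * h + 1)) ∧
        (z ^ 2 - 3 * z + 9) * (z ^ 2 + 229 * z + 505) ^ 3 / (z - 8) ^ 7 =
            (h ^ 2 - h + 1) ^ 3 *
                (h ^ 6 + 229 * h ^ 5 + 270 * h ^ 4 - 1695 * h ^ 3 + 1430 * h ^ 2
                  - 235 * h + 1) ^ 3 /
              (h * (h - 1) * (h ^ 3 - 8 * h ^ 2 + 5 * h + 1) ^ 7) := by
  intro h hh z hz
  have h0 : h ≠ 0 := hh ▸ RatFunc.X_ne_zero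
  have h1 : h - 1 ≠ 0 := by
    subst hh
    have := ratfunc_poly_ne_zero (Polynomial.X - 1) (by
      intro H; have := congrArg (Polynomial.eval 0) H; simp at this)
    simpa [map_ofNat] using this
  have hb : h * (h - 1) ≠ 0 := mul_ne_zero h0 h1
  have hc : h ^ 3 - 8 * h ^ 2 + 5 * h + 1 ≠ 0 := by
    subst hh
    have := ratfunc_poly_ne_zero (Polynomial.X^3 - 8*Polynomial.X^2 + 5*Polynomial.X + 1) (by
      intro H; have := congrArg (Polynomial.eval 0) H; simp at this)
    simpa [map_ofNat] using this
  have hz8 : z - 8 = (h ^ 3 - 8 * h ^ 2 + 5 * h + 1) / (h * (h - 1)) := by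
    rw [hz, div_sub' hb]; ring_nf
  set a := h ^ 3 - 3 * h + 1 with ha
  set b := h * (h - 1) with hbdef
  set c := h ^ 3 - 8 * h ^ 2 + 5 * h + 1 with hcdef
  constructor
  · rw [hz8, hz, frac1 a b c hb hc]
    rw [ha, hbdef]
    rw [show ((h^3-3*h+1)^2 - 3*(h^3-3*h+1)*(h*(h-1)) + 9*(h*(h-1))^2) *
        ((h^3-3*h+1)^2 - 11*(h^3-3*h+1)*(h*(h-1)) + 25*(h*(h-1))^2)^3 =
        (h ^ 2 - h + 1) ^ 3 *
          (h ^ 6 - 11 * h ^ 5 + 30 * h ^ 4 - 15 * h ^ 3 - 10 * h ^ 2 + 5 * h + 1) ^ 3 from by ring,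
      show (h*(h-1))^7 * c = h ^ 7 * (h - 1) ^ 7 * c from by ring]
  · rw [hz8, hz, frac2 a b c hb hc]
    rw [ha, hbdef]
    rw [show ((h^3-3*h+1)^2 - 3*(h^3-3*h+1)*(h*(h-1)) + 9*(h*(h-1))^2) *
        ((h^3-3*h+1)^2 + 229*(h^3-3*h+1)*(h*(h-1)) + 505*(h*(h-1))^2)^3 =
        (h ^ 2 - h + 1) ^ 3 *
          (h ^ 6 + 229 * h ^ 5 + 270 * h ^ 4 - 1695 * h ^ 3 + 1430 * h ^ 2 - 235 * h + 1) ^ 3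
        from by ring]
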